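/- arXiv:0902.0829 — 3 statements merged into one kernel-verified Lean document; each statement's English description precedes it below -/
import Mathlib

section
/- The function d : ℝ² → ℝ given by d(x,y) = hyperbolic distance in the upper half-plane between i·e^x and 1 + i·e^y is strictly convex; that is, for all distinct (x₀,y₀), (x₁,y₁) ∈ ℝ² and every t ∈ (0,1), d(t·x₀ + (1−t)·x₁, t·y₀ + (1−t)·y₁) < t·d(x₀,y₀) + (1−t)·d(x₁,y₁). -/
open UpperHalfPlane

/-- The point `i·e^x` of the upper half-plane. -/
noncomputable def ptA (x : ℝ) : UpperHalfPlane :=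
  ⟨(Real.exp x : ℂ) * Complex.I, by simp [Complex.mul_I_im, Complex.exp_ofReal_re, Real.exp_pos]⟩

/-- The point `1 + i·e^y` of the upper half-plane. -/
noncomputable def ptB (y : ℝ) : UpperHalfPlane :=
  ⟨1 + (Real.exp y : ℂ) * Complex.I, by
    simp [Complex.add_im, Complex.mul_I_im, Complex.exp_ofReal_re, Real.exp_pos]⟩

/-- The hyperbolic distance between `i·e^x` and `1 + i·e^y`. -/
noncomputable def hypd (x y : ℝ) : ℝ := dist (ptA x) (ptB y)

noncomputable def myacosh (t : ℝ) : ℝ := Real.log (t + Real.sqrt (t^2 - 1))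

lemma cosh_myacosh {t : ℝ} (ht : 1 ≤ t) : Real.cosh (myacosh t) = t := by
  have h1 : (0:ℝ) ≤ t^2 - 1 := by nlinarith
  have hs := Real.sq_sqrt h1
  have hs0 := Real.sqrt_nonneg (t^2-1)
  have hy : 0 < t + Real.sqrt (t^2-1) := by nlinarith
  rw [myacosh, Real.cosh_eq, Real.exp_log hy, Real.exp_neg, Real.exp_log hy]
  rw [show (t + Real.sqrt (t^2-1))⁻¹ = t - Real.sqrt (t^2-1) from
    inv_eq_of_mul_eq_one_left (by nlinarith)]
  ring

lemma myacosh_nonneg {t : ℝ} (ht : 1 ≤ t) : 0 ≤ myacosh t := by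
  apply Real.log_nonneg; have := Real.sqrt_nonneg (t^2-1); linarith

lemma hasDerivAt_myacosh {t : ℝ} (ht : 1 < t) :
    HasDerivAt myacosh (1 / Real.sqrt (t^2 - 1)) t := by
  have h1 : (0:ℝ) < t^2 - 1 := by nlinarith
  have hs := Real.sq_sqrt h1.le
  have hs0 : 0 < Real.sqrt (t^2-1) := Real.sqrt_pos.2 h1
  have hy : 0 < t + Real.sqrt (t^2-1) := by nlinarith
  have hinner : HasDerivAt (fun s : ℝ => s + Real.sqrt (s^2-1))
      (1 + t / Real.sqrt (t^2-1)) t := by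
    have h2 : HasDerivAt (fun s : ℝ => s^2 - 1) (2*t) t := by
      simpa using ((hasDerivAt_pow 2 t).sub_const 1)
    have h3 := (Real.hasDerivAt_sqrt h1.ne').comp t h2
    have h4 := (hasDerivAt_id t).add h3
    refine h4.congr_deriv ?_
    field_simp
  have := (Real.hasDerivAt_log hy.ne').comp t hinner
  refine this.congr_deriv ?_
  field_simp
  nlinarith [hs]

lemma cosh_hypd (x y : ℝ) :
    Real.cosh (hypd x y) = Real.cosh (x - y) + Real.exp (-x - y) / 2 := by
  have h := UpperHalfPlane.cosh_dist (ptA x) (ptB y)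
  have him1 : (ptA x).im = Real.exp x := by
    simp [ptA, UpperHalfPlane.im, Complex.mul_I_im, Complex.exp_ofReal_re]
  have him2 : (ptB y).im = Real.exp y := by
    simp [ptB, UpperHalfPlane.im, Complex.mul_I_im, Complex.exp_ofReal_re]
  have hd : dist ((ptA x) : ℂ) ((ptB y) : ℂ) ^ 2 = 1 + (Real.exp x - Real.exp y)^2 := by
    rw [Complex.dist_eq, Complex.sq_norm, Complex.normSq_apply]
    simp [ptA, ptB, Complex.add_re, Complex.add_im, Complex.mul_I_re, Complex.mul_I_im,
      Complex.exp_ofReal_re]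
    ring
  rw [hypd, h, him1, him2, hd, Real.cosh_eq]
  have e1 : Real.exp (x-y) = Real.exp x / Real.exp y := by rw [Real.exp_sub]
  have e2 : Real.exp (-(x-y)) = Real.exp y / Real.exp x := by
    rw [neg_sub, Real.exp_sub]
  have e3 : Real.exp (-x-y) = 1/(Real.exp x * Real.exp y) := by
    rw [show -x-y = -(x+y) by ring, Real.exp_neg, Real.exp_add]; ring
  rw [e1, e2, e3]
  have px := Real.exp_pos x
  have py := Real.exp_pos y
  field_simp
  ring

lemma hypd_eq (x y : ℝ) :
    hypd x y = myacosh (Real.cosh (x - y) + Real.exp (-x - y) / 2) := by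
  have h1 : 1 ≤ Real.cosh (x-y) + Real.exp (-x-y)/2 := by
    have := Real.one_le_cosh (x-y); have := Real.exp_pos (-x-y); linarith
  apply Real.cosh_strictMonoOn.injOn (dist_nonneg : (0:ℝ) ≤ dist (ptA x) (ptB y))
    (myacosh_nonneg h1)
  rw [cosh_myacosh h1, ← cosh_hypd]
  rfl

lemma key_pos {a c C S E : ℝ} (hC : 1 ≤ C) (hCS : C^2 = S^2 + 1) (hE : 0 < E)
    (hac : a ≠ 0 ∨ c ≠ 0) :
    0 < (a^2*C + c^2*E) * ((C+E)^2 - 1) - (C+E) * (a*S - c*E)^2 := by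
  have hC0 : (0:ℝ) < C := by linarith
  have hid : ((a^2*C + c^2*E) * ((C+E)^2 - 1) - (C+E) * (a*S - c*E)^2) * C
      = E * (C*(a*C+c*S)^2 + C*a^2 + E*((a*C+c*S)^2 + c^2)) := by
    linear_combination (c^2*E^2 + c^2*C*E + a^2*C*E + a^2*C^2) * hCS
  have hpos : 0 < C*(a*C+c*S)^2 + C*a^2 + E*((a*C+c*S)^2 + c^2) := by
    have ht1 : 0 ≤ C*(a*C+c*S)^2 := by positivity
    rcases hac with ha | hc
    · have h2 : 0 < a^2 := by positivity
      have ht3 : 0 ≤ E*((a*C+c*S)^2 + c^2) := by positivity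
      nlinarith
    · have h2 : 0 < c^2 := by positivity
      have ht2 : 0 ≤ C*a^2 := by positivity
      nlinarith
  have h2 : 0 < (((a^2*C + c^2*E) * ((C+E)^2 - 1) - (C+E) * (a*S - c*E)^2)) * C := by
    rw [hid]; exact mul_pos hE hpos
  nlinarith [h2, hC0]

lemma strict_convex_phi (a b c d : ℝ) (hac : a ≠ 0 ∨ c ≠ 0) :
    StrictConvexOn ℝ Set.univ
      (fun s : ℝ => myacosh (Real.cosh (a*s+b) + Real.exp (-(c*s+d))/2)) := by
  set F : ℝ → ℝ := fun s => Real.cosh (a*s+b) + Real.exp (-(c*s+d))/2 with hFdef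
  set F' : ℝ → ℝ := fun s => a * Real.sinh (a*s+b) - c * (Real.exp (-(c*s+d))/2) with hF'def
  set G : ℝ → ℝ := fun s => Real.sqrt (F s ^ 2 - 1) with hGdef
  have hF1 : ∀ s, 1 < F s := fun s => by
    have := Real.one_le_cosh (a*s+b); have := Real.exp_pos (-(c*s+d))
    simp only [hFdef]; linarith
  have hGpos : ∀ s, 0 < G s := fun s => Real.sqrt_pos.2 (by nlinarith [hF1 s])
  have hGsq : ∀ s, G s ^ 2 = F s ^2 - 1 := fun s => Real.sq_sqrt (by nlinarith [hF1 s])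
  have hlin : ∀ s, HasDerivAt (fun s : ℝ => a*s+b) a s := fun s => by
    simpa using ((hasDerivAt_id s).const_mul a).add_const b
  have hlin2 : ∀ s, HasDerivAt (fun s : ℝ => -(c*s+d)) (-c) s := fun s => by
    exact (by simpa using ((hasDerivAt_id s).const_mul c).add_const d :
      HasDerivAt (fun s : ℝ => c*s+d) c s).neg
  have hFd : ∀ s, HasDerivAt F (F' s) s := fun s => by
    have h1 := (Real.hasDerivAt_cosh (a*s+b)).comp s (hlin s)
    have h2 := ((Real.hasDerivAt_exp (-(c*s+d))).comp s (hlin2 s)).div_const 2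
    refine (h1.add h2).congr_deriv ?_
    simp only [hF'def]; ring
  have hF'd : ∀ s, HasDerivAt F' (a^2 * Real.cosh (a*s+b) + c^2 * (Real.exp (-(c*s+d))/2)) s := by
    intro s
    have h1 := ((Real.hasDerivAt_sinh (a*s+b)).comp s (hlin s)).const_mul a
    have h2 := (((Real.hasDerivAt_exp (-(c*s+d))).comp s (hlin2 s)).div_const 2).const_mul c
    refine (h1.sub h2).congr_deriv ?_
    ring
  have hφd : ∀ s, HasDerivAt (fun s => myacosh (F s)) (F' s / G s) s := fun s => by
    have := (hasDerivAt_myacosh (hF1 s)).comp s (hFd s)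
    refine this.congr_deriv ?_
    simp only [hGdef]; ring
  have hGd : ∀ s, HasDerivAt G (F s * F' s / G s) s := fun s => by
    have hsq : HasDerivAt (fun s => F s ^ 2 - 1) (2 * F s * F' s) s := by
      simpa [mul_comm, mul_assoc, mul_left_comm] using ((hFd s).pow 2).sub_const 1
    have := (Real.hasDerivAt_sqrt (x := F s ^2 - 1) (by nlinarith [hF1 s])).comp s hsq
    refine this.congr_deriv ?_
    have hG0 := (hGpos s).ne'
    simp only [hGdef] at hG0 ⊢
    field_simp
  have hφ'd : ∀ s, HasDerivAt (fun s => F' s / G s)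
      (((a^2 * Real.cosh (a*s+b) + c^2 * (Real.exp (-(c*s+d))/2)) * (F s^2-1)
        - F s * F' s ^2) / ((F s^2-1) * G s)) s := fun s => by
    have := (hF'd s).div (hGd s) (hGpos s).ne'
    refine this.congr_deriv ?_
    have hG0 := (hGpos s).ne'
    rw [← hGsq s]
    field_simp
  have hderiv : deriv (fun s => myacosh (F s)) = fun s => F' s / G s := by
    funext s; exact (hφd s).deriv
  apply strictConvexOn_univ_of_deriv2_pos
  · exact Differentiable.continuous (fun s => (hφd s).differentiableAt)
  · intro s
    have h2 : deriv^[2] (fun s => myacosh (F s)) s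
        = deriv (fun s => F' s / G s) s := by
      simp [Function.iterate_succ, hderiv]
    rw [h2, (hφ'd s).deriv]
    apply div_pos
    · have := key_pos (a := a) (c := c) (C := Real.cosh (a*s+b)) (S := Real.sinh (a*s+b))
        (E := Real.exp (-(c*s+d))/2) (Real.one_le_cosh _)
        (by nlinarith [Real.cosh_sq_sub_sinh_sq (a*s+b)]) (by positivity) hac
      have hFs : F s = Real.cosh (a*s+b) + Real.exp (-(c*s+d))/2 := rfl
      have hF's : F' s = a * Real.sinh (a*s+b) - c * (Real.exp (-(c*s+d))/2) := rfl
      rw [hFs, hF's]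
      nlinarith [this]
    · exact mul_pos (by nlinarith [hF1 s]) (hGpos s)

theorem hypd_strictConvex :
    ∀ p q : ℝ × ℝ, p ≠ q → ∀ t : ℝ, 0 < t → t < 1 →
      hypd (t * p.1 + (1 - t) * q.1) (t * p.2 + (1 - t) * q.2) <
        t * hypd p.1 p.2 + (1 - t) * hypd q.1 q.2 := by
  intro p q hpq t ht0 ht1
  set a : ℝ := (p.1 - p.2) - (q.1 - q.2) with ha
  set b : ℝ := q.1 - q.2 with hb
  set c : ℝ := (p.1 + p.2) - (q.1 + q.2) with hc
  set d : ℝ := q.1 + q.2 with hd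
  have hac : a ≠ 0 ∨ c ≠ 0 := by
    by_contra h
    push_neg at h
    apply hpq
    have h1 := h.1; have h2 := h.2
    rw [ha] at h1; rw [hc] at h2
    have : p.1 = q.1 := by linarith
    have : p.2 = q.2 := by linarith
    exact Prod.ext ‹p.1 = q.1› ‹p.2 = q.2›
  have hsc := strict_convex_phi a b c d hac
  have key := hsc.2 (Set.mem_univ (1:ℝ)) (Set.mem_univ (0:ℝ)) one_ne_zero ht0
    (by linarith : 0 < 1 - t) (by ring)
  simp only [smul_eq_mul, mul_one, mul_zero, add_zero] at key
  have E0 : hypd (t * p.1 + (1 - t) * q.1) (t * p.2 + (1 - t) * q.2)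
      = myacosh (Real.cosh (a*t+b) + Real.exp (-(c*t+d))/2) := by
    rw [hypd_eq]
    congr 2
    · rw [ha, hb]; ring
    · rw [hc, hd]; ring
  have E1 : hypd p.1 p.2 = myacosh (Real.cosh (a*1+b) + Real.exp (-(c*1+d))/2) := by
    rw [hypd_eq]
    congr 2
    · rw [ha, hb]; ring
    · rw [hc, hd]; ring
  have E2 : hypd q.1 q.2 = myacosh (Real.cosh (a*0+b) + Real.exp (-(c*0+d))/2) := by
    rw [hypd_eq]
    congr 2
    · rw [ha, hb]; ring
    · rw [hc, hd]; ring
  rw [E0, E1, E2]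
  simpa only [mul_one, mul_zero, zero_add] using key
end

section
/- For all real numbers x and y, the hyperbolic distance d(x,y) between i·e^x and 1 + i·e^y in the upper half-plane satisfies the upper bound d(x,y) ≤ |x − y| + 1/max(e^x, e^y). -/
open UpperHalfPlane

lemma ptA_re (x : ℝ) : (ptA x).re = 0 := by
  simp [ptA, UpperHalfPlane.re, Complex.mul_I_re, Complex.exp_ofReal_im]

lemma ptA_im (x : ℝ) : (ptA x).im = Real.exp x := by
  simp [ptA, UpperHalfPlane.im, Complex.mul_I_im, Complex.exp_ofReal_re]

lemma ptB_re (y : ℝ) : (ptB y).re = 1 := by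
  simp [ptB, UpperHalfPlane.re, Complex.mul_I_re, Complex.exp_ofReal_im]

lemma ptB_im (y : ℝ) : (ptB y).im = Real.exp y := by
  simp [ptB, UpperHalfPlane.im, Complex.mul_I_im, Complex.exp_ofReal_re]

lemma dist_ptA (x x' : ℝ) : dist (ptA x) (ptA x') = |x - x'| := by
  rw [UpperHalfPlane.dist_of_re_eq (by rw [ptA_re, ptA_re]), ptA_im, ptA_im,
    Real.log_exp, Real.log_exp, Real.dist_eq]

lemma dist_ptB (y y' : ℝ) : dist (ptB y) (ptB y') = |y - y'| := by
  rw [UpperHalfPlane.dist_of_re_eq (by rw [ptB_re, ptB_re]), ptB_im, ptB_im,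
    Real.log_exp, Real.log_exp, Real.dist_eq]

lemma dist_ptA_ptB_same (m : ℝ) : dist (ptA m) (ptB m) ≤ 1 / Real.exp m := by
  have h := UpperHalfPlane.dist_le_dist_coe_div_sqrt (ptA m) (ptB m)
  have hc : dist ((ptA m : ℂ)) ((ptB m : ℂ)) = 1 := by
    simp only [ptA, ptB, UpperHalfPlane.coe_mk, Complex.dist_eq]
    ring_nf
    simp
  rw [hc, ptA_im, ptB_im, Real.sqrt_mul_self (Real.exp_pos m).le] at h
  exact h

theorem hypd_le (x y : ℝ) :
    hypd x y ≤ |x - y| + 1 / max (Real.exp x) (Real.exp y) := by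
  set M := max x y with hM
  have hmax : max (Real.exp x) (Real.exp y) = Real.exp M := by
    rw [hM]
    exact (Real.exp_monotone.map_max).symm
  have h1 : hypd x y ≤ dist (ptA x) (ptA M) + dist (ptA M) (ptB M) + dist (ptB M) (ptB y) :=
    (dist_triangle4 _ _ _ _)
  have habs : |x - M| + |M - y| = |x - y| := by
    rcases le_total x y with h | h
    · rw [hM, max_eq_right h]; simp
    · rw [hM, max_eq_left h]; simp
  rw [hmax]
  calc hypd x y ≤ |x - M| + dist (ptA M) (ptB M) + |M - y| := by
        rw [dist_ptA, dist_ptB] at h1; linarith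
    _ ≤ |x - M| + 1 / Real.exp M + |M - y| := by linarith [dist_ptA_ptB_same M]
    _ = |x - y| + 1 / Real.exp M := by linarith
end

section
/- Let V₀ and V₁ be real vector spaces, let P be a linear subspace of V₀ × V₁ whose projection onto V₀ is surjective, and for x ∈ V₀ set P_x = {y ∈ V₁ : (x,y) ∈ P}. Suppose F : V₀ × V₁ → (−∞, ∞] is such that its restriction to P is strictly convex in the midpoint sense, and suppose that for every x ∈ V₀ the infimum of F(x,·) over P_x is attained, i.e. f(x) = min_{y ∈ P_x} F(x,y). Then f : V₀ → (−∞, ∞] is strictly convex in the midpoint sense: for all x₀ ≠ x₁ with f(x₀), f(x₁) finite, f((x₀+x₁)/2) < (f(x₀)+f(x₁))/2. -/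
/-- **Lemma 5.5, strict convexity part.** Let `V₀`, `V₁` be real vector spaces and `P` a
linear subspace of `V₀ × V₁` whose projection onto `V₀` is surjective.  Suppose
`F : V₀ × V₁ → (-∞, ∞]` is strictly midpoint-convex on `P`, and that for every `x` the
infimum of `F (x, ·)` over `Pₓ = {y | (x, y) ∈ P}` is attained, with value `f x`.
Then `f` is strictly midpoint-convex. -/
theorem minimum_strict_midpoint_convex
    {V₀ V₁ : Type*} [AddCommGroup V₀] [Module ℝ V₀] [AddCommGroup V₁] [Module ℝ V₁]
    (P : Submodule ℝ (V₀ × V₁))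
    (hP : ∀ x : V₀, ∃ y : V₁, (x, y) ∈ P)
    (F : V₀ × V₁ → EReal)
    (hFbot : ∀ p, F p ≠ ⊥)
    (hF : ∀ p q : V₀ × V₁, p ∈ P → q ∈ P → p ≠ q → F p ≠ ⊤ → F q ≠ ⊤ →
      F ((2 : ℝ)⁻¹ • (p + q)) < (F p + F q) / 2)
    (f : V₀ → EReal)
    (hf : ∀ x : V₀, ∃ y : V₁, (x, y) ∈ P ∧ f x = F (x, y) ∧
      ∀ y' : V₁, (x, y') ∈ P → F (x, y) ≤ F (x, y')) :
    ∀ x₀ x₁ : V₀, x₀ ≠ x₁ → f x₀ ≠ ⊤ → f x₀ ≠ ⊥ → f x₁ ≠ ⊤ → f x₁ ≠ ⊥ →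
      f ((2 : ℝ)⁻¹ • (x₀ + x₁)) < (f x₀ + f x₁) / 2 := by
  intro x₀ x₁ hne h0t h0b h1t h1b
  obtain ⟨y₀, hy₀P, hy₀f, hy₀min⟩ := hf x₀
  obtain ⟨y₁, hy₁P, hy₁f, hy₁min⟩ := hf x₁
  obtain ⟨ym, hymP, hymf, hymmin⟩ := hf ((2 : ℝ)⁻¹ • (x₀ + x₁))
  have hmemP : ((2 : ℝ)⁻¹ • ((x₀, y₀) + (x₁, y₁)) : V₀ × V₁) ∈ P :=
    P.smul_mem _ (P.add_mem hy₀P hy₁P)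
  have hmid : ((2 : ℝ)⁻¹ • ((x₀, y₀) + (x₁, y₁)) : V₀ × V₁)
      = ((2 : ℝ)⁻¹ • (x₀ + x₁), (2 : ℝ)⁻¹ • (y₀ + y₁)) := rfl
  have hle : f ((2 : ℝ)⁻¹ • (x₀ + x₁)) ≤ F ((2 : ℝ)⁻¹ • ((x₀, y₀) + (x₁, y₁))) := by
    rw [hymf, hmid]
    exact hymmin _ (hmid ▸ hmemP)
  have hlt := hF (x₀, y₀) (x₁, y₁) hy₀P hy₁P
    (by simp [Prod.ext_iff]; intro h; exact absurd h hne)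
    (hy₀f ▸ h0t) (hy₁f ▸ h1t)
  calc f ((2 : ℝ)⁻¹ • (x₀ + x₁)) ≤ F ((2 : ℝ)⁻¹ • ((x₀, y₀) + (x₁, y₁))) := hle
    _ < (F (x₀, y₀) + F (x₁, y₁)) / 2 := hlt
    _ = (f x₀ + f x₁) / 2 := by rw [hy₀f, hy₁f]
end
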